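/- Let φ : ℝ^{n-1} → ℝ be γ-Hölder continuous with constant C > 0 for some γ ∈ (0,1), with φ(0) = 0, and let Ω = {x ∈ ℝⁿ : xₙ > φ(x')}. Then for all sufficiently small ε > 0, dist(ε·eₙ, ∂Ω) ≥ c·ε^{1/γ} for some constant c > 0 depending only on C and γ, and dist(ε·eₙ, ∂Ω) ≤ ε. -/

import Mathlib

open Set Metric

/-- The projection of `x ∈ ℝ^{n+1}` onto its first `n` coordinates. -/
noncomputable def frontCoords {n : ℕ} (x : EuclideanSpace ℝ (Fin (n + 1))) :
    EuclideanSpace ℝ (Fin n) :=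
  WithLp.toLp 2 (fun i : Fin n => x i.castSucc)

lemma norm_sq_split {n : ℕ} (y : EuclideanSpace ℝ (Fin (n + 1))) :
    ‖y‖ ^ 2 = ‖frontCoords y‖ ^ 2 + (y (Fin.last n)) ^ 2 := by
  have h1 : ‖y‖ ^ 2 = ∑ i : Fin (n + 1), ‖y i‖ ^ 2 := by
    rw [EuclideanSpace.norm_eq, Real.sq_sqrt]
    positivity
  have h2 : ‖frontCoords y‖ ^ 2 = ∑ i : Fin n, ‖y i.castSucc‖ ^ 2 := by
    rw [EuclideanSpace.norm_eq, Real.sq_sqrt]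
    · rfl
    · positivity
  rw [h1, h2, Fin.sum_univ_castSucc]
  simp [Real.norm_eq_abs, sq_abs]

lemma aux_le_infDist {α : Type*} [PseudoMetricSpace α] {s : Set α} {x : α} {b : ℝ}
    (hs : s.Nonempty) (h : ∀ y ∈ s, b ≤ dist x y) : b ≤ infDist x s := by
  by_contra hlt
  push_neg at hlt
  obtain ⟨y, hy, hdy⟩ := (infDist_lt_iff hs).1 hlt
  exact absurd (h y hy) (not_le.2 hdy)

set_option maxHeartbeats 1000000 in
/-- If `φ : ℝⁿ → ℝ` is `γ`-Hölder with constant `C > 0`, `γ ∈ (0,1)`, `φ(0) = 0`, and `Ω` is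
the region above its graph, then for all sufficiently small `ε > 0` one has
`dist(ε • e_{n+1}, ∂Ω) ≥ c • ε^{1/γ}` for a constant `c > 0` depending only on `C` and `γ`,
and `dist(ε • e_{n+1}, ∂Ω) ≤ ε`. -/
theorem dist_to_holder_boundary {n : ℕ} (C γ : ℝ) (hC : 0 < C) (hγ : γ ∈ Ioo (0 : ℝ) 1)
    (φ : EuclideanSpace ℝ (Fin n) → ℝ)
    (hφ : ∀ x y, |φ x - φ y| ≤ C * ‖x - y‖ ^ γ) (hφ0 : φ 0 = 0)
    (Ω : Set (EuclideanSpace ℝ (Fin (n + 1))))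
    (hΩ : Ω = {x | φ (frontCoords x) < x (Fin.last n)}) :
    ∃ c > (0 : ℝ), ∃ ε₀ > (0 : ℝ), ∀ ε : ℝ, 0 < ε → ε < ε₀ →
      c * ε ^ (1 / γ) ≤
          infDist (ε • EuclideanSpace.single (Fin.last n) (1 : ℝ)) (frontier Ω) ∧
        infDist (ε • EuclideanSpace.single (Fin.last n) (1 : ℝ)) (frontier Ω) ≤ ε := by
  obtain ⟨hγ0, hγ1⟩ := hγ
  -- continuity of φ
  have hφcont : Continuous φ := by
    rw [continuous_iff_continuousAt]
    intro y
    rw [ContinuousAt, tendsto_iff_dist_tendsto_zero]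
    have hg : Filter.Tendsto (fun x : EuclideanSpace ℝ (Fin n) => C * ‖x - y‖ ^ γ)
        (nhds y) (nhds 0) := by
      have h1 : Filter.Tendsto (fun x : EuclideanSpace ℝ (Fin n) => ‖x - y‖) (nhds y)
          (nhds 0) := by
        have hc : Continuous (fun x : EuclideanSpace ℝ (Fin n) => ‖x - y‖) := by
          continuity
        exact hc.tendsto' y 0 (by simp)
      have h2 : ContinuousAt (fun t : ℝ => t ^ γ) 0 :=
        Real.continuousAt_rpow_const 0 γ (Or.inr hγ0.le)
      have h3 := h2.tendsto.comp h1
      rw [Real.zero_rpow hγ0.ne'] at h3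
      simpa using h3.const_mul C
    exact squeeze_zero (fun x => dist_nonneg)
      (fun x => by rw [Real.dist_eq]; exact hφ x y) hg
  have hcoordcont : Continuous fun x : EuclideanSpace ℝ (Fin (n + 1)) => x (Fin.last n) :=
    (EuclideanSpace.proj (Fin.last n) :
      EuclideanSpace ℝ (Fin (n + 1)) →L[ℝ] ℝ).continuous
  have hfrontcont : Continuous fun x : EuclideanSpace ℝ (Fin (n + 1)) => frontCoords x := by
    unfold frontCoords
    apply (PiLp.continuous_toLp 2 _).comp
    apply continuous_pi
    intro i
    exact (EuclideanSpace.proj i.castSucc :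
      EuclideanSpace ℝ (Fin (n + 1)) →L[ℝ] ℝ).continuous
  have hfr : frontier Ω ⊆ {x | φ (frontCoords x) = x (Fin.last n)} := by
    rw [hΩ]
    exact frontier_lt_subset_eq (hφcont.comp hfrontcont) hcoordcont
  -- frontCoords of the vertical vector is 0
  have hfc0 : ∀ t : ℝ,
      frontCoords (t • EuclideanSpace.single (Fin.last n) (1 : ℝ)) = 0 := by
    intro t
    ext i
    have hne : i.castSucc ≠ Fin.last n := Fin.castSucc_lt_last i |>.ne
    simp [frontCoords, EuclideanSpace.single_apply, hne]
  -- 0 ∈ frontier Ω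
  have h0mem : (0 : EuclideanSpace ℝ (Fin (n + 1))) ∈ frontier Ω := by
    have hnot : (0 : EuclideanSpace ℝ (Fin (n + 1))) ∉ Ω := by
      rw [hΩ]
      have : frontCoords (0 : EuclideanSpace ℝ (Fin (n + 1))) = 0 := by
        ext i; simp [frontCoords]
      simp [this, hφ0]
    have hcl : (0 : EuclideanSpace ℝ (Fin (n + 1))) ∈ closure Ω := by
      have htend : Filter.Tendsto
          (fun t : ℝ => t • EuclideanSpace.single (Fin.last n) (1 : ℝ))
          (nhdsWithin 0 (Ioi 0)) (nhds 0) := by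
        have hcont : Continuous
            (fun t : ℝ => t • EuclideanSpace.single (Fin.last n) (1 : ℝ)) :=
          continuous_id.smul continuous_const
        exact (hcont.tendsto' 0 0 (by simp)).mono_left nhdsWithin_le_nhds
      apply mem_closure_of_tendsto htend
      filter_upwards [self_mem_nhdsWithin] with t ht
      rw [hΩ]
      have hlast : (t • EuclideanSpace.single (Fin.last n) (1 : ℝ)) (Fin.last n) = t := by
        simp [EuclideanSpace.single_apply]
      simp only [mem_setOf_eq, hfc0 t, hφ0, hlast]
      exact ht
    rw [frontier, mem_diff]
    refine ⟨hcl, fun hint => hnot (interior_subset hint)⟩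
  have hSne : (frontier Ω).Nonempty := ⟨0, h0mem⟩
  -- the constant
  refine ⟨min ((1 / (2 * C)) ^ (1 / γ)) (1 / 2), ?_, 1, one_pos, ?_⟩
  · apply lt_min
    · positivity
    · norm_num
  intro ε hε0 hε1
  set p := ε • EuclideanSpace.single (Fin.last n) (1 : ℝ) with hp
  have hplast : p (Fin.last n) = ε := by
    simp [hp, EuclideanSpace.single_apply]
  have hnormp : ‖p‖ = ε := by
    rw [hp, norm_smul, EuclideanSpace.norm_single]
    simp [abs_of_pos hε0]
  have hεpow_le : ε ^ (1 / γ) ≤ ε := by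
    have h1γ : 1 ≤ 1 / γ := (le_div_iff₀ hγ0).2 (by linarith)
    calc ε ^ (1 / γ) ≤ ε ^ (1 : ℝ) :=
          Real.rpow_le_rpow_of_exponent_ge hε0 hε1.le h1γ
      _ = ε := Real.rpow_one ε
  constructor
  · -- lower bound
    apply aux_le_infDist hSne
    intro y hy
    have hyeq : φ (frontCoords y) = y (Fin.last n) := hfr hy
    rw [dist_eq_norm]
    have hsplit := norm_sq_split (p - y)
    have hfpy : frontCoords (p - y) = -(frontCoords y) := by
      ext i
      have : (p - y) i.castSucc = p i.castSucc - y i.castSucc := rfl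
      have hpz : p i.castSucc = 0 := by
        have := congrArg (fun v => v i) (hfc0 ε)
        exact this
      simp [frontCoords, this, hpz]
    have hlastpy : (p - y) (Fin.last n) = ε - y (Fin.last n) := by
      rw [PiLp.sub_apply, hplast]
    set a := ‖frontCoords y‖ with ha
    have ha0 : 0 ≤ a := norm_nonneg _
    have hφy : |y (Fin.last n)| ≤ C * a ^ γ := by
      have := hφ (frontCoords y) 0
      simpa [hφ0, hyeq, sub_zero] using this
    set r := (ε / (2 * C)) ^ (1 / γ) with hr
    have hr0 : 0 < r := Real.rpow_pos_of_pos (by positivity) _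
    have hnorm_ge_a : a ≤ ‖p - y‖ := by
      have : a ^ 2 ≤ ‖p - y‖ ^ 2 := by
        rw [hsplit, hfpy, norm_neg]
        nlinarith [sq_nonneg ((p - y) (Fin.last n))]
      nlinarith [norm_nonneg (p - y)]
    have hnorm_ge_last : |ε - y (Fin.last n)| ≤ ‖p - y‖ := by
      have : (ε - y (Fin.last n)) ^ 2 ≤ ‖p - y‖ ^ 2 := by
        rw [hsplit, hlastpy]
        nlinarith [sq_nonneg ‖frontCoords (p - y)‖]
      nlinarith [norm_nonneg (p - y), abs_nonneg (ε - y (Fin.last n)), sq_abs (ε - y (Fin.last n))]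
    rcases le_or_gt r a with hcase | hcase
    · -- far case
      have hrval : r = (1 / (2 * C)) ^ (1 / γ) * ε ^ (1 / γ) := by
        rw [hr, ← Real.mul_rpow (by positivity) hε0.le]
        ring_nf
      calc min ((1 / (2 * C)) ^ (1 / γ)) (1 / 2) * ε ^ (1 / γ)
          ≤ (1 / (2 * C)) ^ (1 / γ) * ε ^ (1 / γ) := by
            apply mul_le_mul_of_nonneg_right (min_le_left _ _)
            positivity
        _ = r := hrval.symm
        _ ≤ a := hcase
        _ ≤ ‖p - y‖ := hnorm_ge_a
    · -- near case
      have hrγ : r ^ γ = ε / (2 * C) := by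
        rw [hr, ← Real.rpow_mul (by positivity), one_div,
          inv_mul_cancel₀ hγ0.ne', Real.rpow_one]
      have haγ : C * a ^ γ < ε / 2 := by
        have : a ^ γ < r ^ γ := by
          rcases eq_or_lt_of_le ha0 with h | h
          · rw [← h, Real.zero_rpow hγ0.ne']
            exact Real.rpow_pos_of_pos hr0 _
          · exact Real.rpow_lt_rpow ha0 hcase hγ0
        rw [hrγ] at this
        calc C * a ^ γ < C * (ε / (2 * C)) := by
              exact mul_lt_mul_of_pos_left this hC
          _ = ε / 2 := by field_simp
      have hylast : y (Fin.last n) < ε / 2 :=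
        lt_of_le_of_lt (le_trans (le_abs_self _) hφy) haγ
      have : ε / 2 ≤ |ε - y (Fin.last n)| := by
        rw [abs_of_pos (by linarith)]
        linarith
      calc min ((1 / (2 * C)) ^ (1 / γ)) (1 / 2) * ε ^ (1 / γ)
          ≤ (1 / 2) * ε ^ (1 / γ) := by
            apply mul_le_mul_of_nonneg_right (min_le_right _ _)
            positivity
        _ ≤ (1 / 2) * ε := by linarith [hεpow_le]
        _ = ε / 2 := by ring
        _ ≤ |ε - y (Fin.last n)| := this
        _ ≤ ‖p - y‖ := hnorm_ge_last
  · -- upper bound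
    calc infDist p (frontier Ω) ≤ dist p 0 := infDist_le_dist_of_mem h0mem
      _ = ‖p‖ := by rw [dist_zero_right]
      _ = ε := hnormp
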